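/- Let $w \in W_\infty$ and $i < j$ positive integers, and let $\bar{t}_{ij}$ be the reflection acting on the right by $(\ldots, w_i, \ldots, w_j, \ldots)\bar{t}_{ij} = (\ldots, -w_j, \ldots, -w_i, \ldots)$. Then $\ell(w \bar{t}_{ij}) = \ell(w) + 1$ if and only if: (i) $-w_i < w_j$, (ii) $w_i < 0$ or $w_j < 0$, and (iii) there is no $p < i$ with $-w_j < w_p < w_i$ and no $p < j$ with $-w_i < w_p < w_j$. -/

import Mathlib

set_option linter.unreachableTactic false
set_option linter.unusedTactic false
set_option linter.unusedVariables false
set_option maxHeartbeats 1000000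

/-- A finitely supported signed permutation of the positive integers. -/
def IsSignedPerm (π : Equiv.Perm ℤ) : Prop :=
  (∀ k : ℤ, π (-k) = - π k) ∧ ∃ N : ℕ, ∀ k : ℤ, (N : ℤ) < |k| → π k = k

/-- The type C simple reflections. -/
def genC : ℕ → Equiv.Perm ℤ
  | 0 => Equiv.swap 1 (-1)
  | (i + 1) => Equiv.swap ((i : ℤ) + 1) ((i : ℤ) + 2) *
      Equiv.swap (-((i : ℤ) + 1)) (-((i : ℤ) + 2))

/-- The type C Coxeter length. -/
noncomputable def lenC (π : Equiv.Perm ℤ) : ℕ :=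
  sInf {m | ∃ l : List (Equiv.Perm ℤ),
    (∀ x ∈ l, ∃ i, x = genC i) ∧ l.length = m ∧ l.prod = π}

/-- The reflection `t̄_{ij}` (for `0 < i < j`), whose right action on a signed
permutation interchanges the entries in positions `i` and `j` and changes
both of their signs. -/
def tbar (i j : ℤ) : Equiv.Perm ℤ := Equiv.swap i (-j) * Equiv.swap (-i) j

namespace BilleyAux
open Finset

abbrev SOdd (w : Equiv.Perm ℤ) : Prop := ∀ k : ℤ, w (-k) = - w k

lemma sodd_zero {w : Equiv.Perm ℤ} (h : SOdd w) : w 0 = 0 := by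
  have := h 0; simp only [neg_zero] at this; omega

lemma sodd_ne_zero {w : Equiv.Perm ℤ} (h : SOdd w) {k : ℤ} (hk : k ≠ 0) : w k ≠ 0 := by
  intro hc
  exact hk (w.injective (by rw [hc, sodd_zero h]))

lemma sodd_mul {w v : Equiv.Perm ℤ} (hw : SOdd w) (hv : SOdd v) : SOdd (w * v) := by
  intro k
  simp only [Equiv.Perm.mul_apply, hv k, hw (v k)]

lemma sodd_one : SOdd 1 := by intro k; simp

lemma genC_zero_apply (x : ℤ) : genC 0 x = if x = 1 then -1 else if x = -1 then 1 else x := by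
  simp [genC, Equiv.swap_apply_def]

lemma genC_succ_apply (k : ℕ) (x : ℤ) : genC (k+1) x =
    if x = (k:ℤ)+1 then (k:ℤ)+2 else if x = (k:ℤ)+2 then (k:ℤ)+1 else
    if x = -((k:ℤ)+1) then -((k:ℤ)+2) else if x = -((k:ℤ)+2) then -((k:ℤ)+1) else x := by
  show (Equiv.swap ((k : ℤ) + 1) ((k : ℤ) + 2)) ((Equiv.swap (-((k : ℤ) + 1)) (-((k : ℤ) + 2))) x) = _
  simp only [Equiv.swap_apply_def]
  split_ifs <;> first | omega | exact ‹False›.elim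

lemma genC_odd (k : ℕ) : SOdd (genC k) := by
  intro x
  cases k with
  | zero => simp only [genC_zero_apply]; split_ifs <;> first | omega | exact ‹False›.elim
  | succ k => simp only [genC_succ_apply]; split_ifs <;> first | omega | exact ‹False›.elim

lemma genC_fix (k : ℕ) (x : ℤ) (hx : (k:ℤ)+1 < |x|) : genC k x = x := by
  have hx' : x < -((k:ℤ)+1) ∨ (k:ℤ)+1 < x := by
    rcases lt_abs.1 hx with h | h
    · right; exact h
    · left; omega
  cases k with
  | zero => rw [genC_zero_apply]; split_ifs <;> first | omega | exact ‹False›.elim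
  | succ k => rw [genC_succ_apply]; split_ifs <;> first | omega | exact ‹False›.elim

lemma genC_sq (k : ℕ) : genC k * genC k = 1 := by
  apply Equiv.ext
  intro x
  simp only [Equiv.Perm.mul_apply, Equiv.Perm.one_apply]
  cases k with
  | zero => simp only [genC_zero_apply]; split_ifs <;> first | omega | exact ‹False›.elim
  | succ k => simp only [genC_succ_apply]; split_ifs <;> first | omega | exact ‹False›.elim

lemma tbar_apply_i {i j : ℤ} (hi : 0 < i) (hij : i < j) : tbar i j i = -j := by
  show (Equiv.swap i (-j)) ((Equiv.swap (-i) j) i) = _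
  simp only [Equiv.swap_apply_def]
  split_ifs <;> first | omega | exact ‹False›.elim

lemma tbar_apply_j {i j : ℤ} (hi : 0 < i) (hij : i < j) : tbar i j j = -i := by
  show (Equiv.swap i (-j)) ((Equiv.swap (-i) j) j) = _
  simp only [Equiv.swap_apply_def]
  split_ifs <;> first | omega | exact ‹False›.elim

lemma tbar_fix {i j x : ℤ} (h1 : x ≠ i) (h2 : x ≠ -i) (h3 : x ≠ j) (h4 : x ≠ -j) :
    tbar i j x = x := by
  show (Equiv.swap i (-j)) ((Equiv.swap (-i) j) x) = _
  simp only [Equiv.swap_apply_def]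
  split_ifs <;> first | omega | exact ‹False›.elim

lemma tbar_odd {i j : ℤ} (hi : 0 < i) (hij : i < j) : SOdd (tbar i j) := by
  intro x
  show (Equiv.swap i (-j)) ((Equiv.swap (-i) j) (-x)) = -((Equiv.swap i (-j)) ((Equiv.swap (-i) j) x))
  simp only [Equiv.swap_apply_def]
  split_ifs <;> first | omega | exact ‹False›.elim


def ff (p q a b : ℤ) : ℤ :=
  (if p < q ∧ b < a then 1 else 0) + (if p ≤ q ∧ a + b < 0 then 1 else 0)

noncomputable def Lsum (N : ℤ) (w : Equiv.Perm ℤ) : ℤ :=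
  ∑ p ∈ Icc 1 N, ∑ q ∈ Icc 1 N, ff p q (w p) (w q)

lemma ff_nonneg (p q a b : ℤ) : 0 ≤ ff p q a b := by
  unfold ff; split_ifs <;> omega

lemma ff_lt {p q : ℤ} (h : p < q) (a b : ℤ) :
    ff p q a b = (if b < a then 1 else 0) + (if a + b < 0 then 1 else 0) := by
  simp only [ff, h, le_of_lt h, true_and]

lemma ff_gt {p q : ℤ} (h : q < p) (a b : ℤ) : ff p q a b = 0 := by
  unfold ff
  rw [if_neg (by omega), if_neg (by omega)]; norm_num

lemma ff_diag (p a b : ℤ) : ff p p a b = if a + b < 0 then 1 else 0 := by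
  unfold ff; simp

lemma Lsum_nonneg (N : ℤ) (w : Equiv.Perm ℤ) : 0 ≤ Lsum N w := by
  apply Finset.sum_nonneg; intro p _
  apply Finset.sum_nonneg; intro q _
  exact ff_nonneg _ _ _ _

lemma Lsum_one (N : ℤ) : Lsum N 1 = 0 := by
  apply Finset.sum_eq_zero; intro p hp
  apply Finset.sum_eq_zero; intro q hq
  simp only [mem_Icc] at hp hq
  simp only [Equiv.Perm.one_apply]
  unfold ff
  rw [if_neg (by omega), if_neg (by omega)]; norm_num

lemma sum_split1 (s : Finset ℤ) (F : ℤ → ℤ → ℤ) {i : ℤ} (hi : i ∈ s) :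
    ∑ p ∈ s, ∑ q ∈ s, F p q =
      F i i + (∑ p ∈ s \ {i}, (F p i + F i p)) + ∑ p ∈ s \ {i}, ∑ q ∈ s \ {i}, F p q := by
  classical
  set t := s \ {i} with ht
  have hit : i ∉ t := by simp [ht]
  have hs : s = insert i t := by
    ext x; simp only [ht, Finset.mem_insert, Finset.mem_sdiff, Finset.mem_singleton]
    constructor
    · intro hx; by_cases h : x = i
      · exact Or.inl h
      · exact Or.inr ⟨hx, h⟩
    · rintro (rfl | ⟨hx, _⟩) <;> [exact hi; exact hx]
  have inner : ∀ p, ∑ q ∈ s, F p q = F p i + ∑ q ∈ t, F p q := by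
    intro p; rw [hs, Finset.sum_insert hit]
  calc ∑ p ∈ s, ∑ q ∈ s, F p q
      = ∑ p ∈ s, (F p i + ∑ q ∈ t, F p q) := Finset.sum_congr rfl fun p _ => inner p
    _ = (F i i + ∑ q ∈ t, F i q) + ∑ p ∈ t, (F p i + ∑ q ∈ t, F p q) := by
        rw [hs, Finset.sum_insert hit]
    _ = _ := by
        rw [Finset.sum_add_distrib, Finset.sum_add_distrib]
        ring

lemma sum_split2 (s : Finset ℤ) (F : ℤ → ℤ → ℤ) {i j : ℤ} (hi : i ∈ s) (hj : j ∈ s)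
    (hij : i ≠ j) :
    ∑ p ∈ s, ∑ q ∈ s, F p q =
      (F i i + F i j + F j i + F j j) +
      (∑ p ∈ s \ {i, j}, (F p i + F p j + F i p + F j p)) +
      ∑ p ∈ s \ {i, j}, ∑ q ∈ s \ {i, j}, F p q := by
  classical
  set t := s \ {i, j} with ht
  have hit : i ∉ t := by simp [ht]
  have hjt : j ∉ t := by simp [ht]
  have hijt : i ∉ insert j t := by simp [hij, hit]
  have hs : s = insert i (insert j t) := by
    ext x
    simp only [ht, Finset.mem_insert, Finset.mem_sdiff, Finset.mem_singleton]
    constructor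
    · intro hx
      by_cases h1 : x = i
      · exact Or.inl h1
      by_cases h2 : x = j
      · exact Or.inr (Or.inl h2)
      · exact Or.inr (Or.inr ⟨hx, by tauto⟩)
    · rintro (rfl | rfl | ⟨hx, _⟩) <;> [exact hi; exact hj; exact hx]
  have inner : ∀ p, ∑ q ∈ s, F p q = F p i + F p j + ∑ q ∈ t, F p q := by
    intro p; rw [hs, Finset.sum_insert hijt, Finset.sum_insert hjt]; ring
  calc ∑ p ∈ s, ∑ q ∈ s, F p q
      = ∑ p ∈ s, (F p i + F p j + ∑ q ∈ t, F p q) := Finset.sum_congr rfl fun p _ => inner p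
    _ = (F i i + F i j + ∑ q ∈ t, F i q) + ((F j i + F j j + ∑ q ∈ t, F j q)
          + ∑ p ∈ t, (F p i + F p j + ∑ q ∈ t, F p q)) := by
        rw [hs, Finset.sum_insert hijt, Finset.sum_insert hjt]
    _ = _ := by
        simp only [Finset.sum_add_distrib]
        ring

end BilleyAux

namespace BilleyAux
open Finset

def ValidB (N : ℤ) (w : Equiv.Perm ℤ) : Prop := ∀ k : ℤ, N < |k| → w k = k

lemma valid_mono {N M : ℤ} {w : Equiv.Perm ℤ} (h : ValidB N w) (hNM : N ≤ M) : ValidB M w :=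
  fun k hk => h k (lt_of_le_of_lt hNM hk)

lemma valid_bound {N : ℤ} {w : Equiv.Perm ℤ} (h : ValidB N w) {x : ℤ} (hx : |x| ≤ N) :
    |w x| ≤ N := by
  by_contra hc
  push_neg at hc
  have h2 := h (w x) hc
  have h3 : w x = x := w.injective h2
  rw [h3] at hc
  omega

lemma Lsum_succ (N : ℤ) (w : Equiv.Perm ℤ) (hN : 1 ≤ N) (hv : ValidB N w) :
    Lsum (N + 1) w = Lsum N w := by
  have hIcc : Icc (1:ℤ) (N+1) = insert (N+1) (Icc 1 N) := by
    ext x; simp only [mem_Icc, mem_insert]; omega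
  have hNin : (N+1) ∉ Icc (1:ℤ) N := by simp [mem_Icc]
  have hwN : w (N+1) = N+1 := hv (N+1) (by rw [abs_of_pos (by omega)]; omega)
  have hb : ∀ q ∈ Icc (1:ℤ) N, |w q| ≤ N := by
    intro q hq; simp only [mem_Icc] at hq
    exact valid_bound hv (by rw [abs_of_pos (by omega)]; omega)
  have hrow : ∀ q ∈ Icc (1:ℤ) (N+1), ff (N+1) q (w (N+1)) (w q) = 0 := by
    intro q hq
    rw [hIcc, mem_insert] at hq
    rcases hq with rfl | hq
    · rw [hwN, ff_diag, if_neg (by omega)]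
    · have := hb q hq
      have h2 : -N ≤ w q ∧ w q ≤ N := abs_le.1 this
      simp only [mem_Icc] at hq
      rw [hwN]
      unfold ff
      rw [if_neg (by omega), if_neg (by omega)]; norm_num
  have hcol : ∀ p ∈ Icc (1:ℤ) N, ff p (N+1) (w p) (w (N+1)) = 0 := by
    intro p hp
    have := hb p hp
    have h2 : -N ≤ w p ∧ w p ≤ N := abs_le.1 this
    simp only [mem_Icc] at hp
    rw [hwN]
    unfold ff
    rw [if_neg (by omega), if_neg (by omega)]; norm_num
  unfold Lsum
  rw [hIcc, Finset.sum_insert hNin]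
  rw [Finset.sum_eq_zero (fun q hq => hrow q (by rw [hIcc]; exact hq))]
  rw [zero_add]
  apply Finset.sum_congr rfl
  intro p hp
  rw [Finset.sum_insert hNin, hcol p hp, zero_add]

lemma Lsum_stable {N M : ℤ} (w : Equiv.Perm ℤ) (hN : 1 ≤ N) (hv : ValidB N w) (hNM : N ≤ M) :
    Lsum M w = Lsum N w := by
  exact Int.le_induction (motive := fun M _ => Lsum M w = Lsum N w) rfl
    (fun M hM ih => by show Lsum (M+1) w = _; rw [Lsum_succ M w (by omega) (valid_mono hv hM)]; exact ih) M hNM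


lemma step0 (N : ℤ) (w : Equiv.Perm ℤ) (hw : SOdd w) (hN : 1 ≤ N) :
    Lsum N (w * genC 0) = Lsum N w + (if 0 < w 1 then 1 else -1) := by
  have h1 : (1:ℤ) ∈ Icc 1 N := by simp only [mem_Icc]; omega
  have ha0 : w 1 ≠ 0 := sodd_ne_zero hw one_ne_zero
  have e1 : (w * genC 0) 1 = -(w 1) := by
    rw [Equiv.Perm.mul_apply, genC_zero_apply, if_pos rfl]
    exact hw 1
  have e2 : ∀ p : ℤ, p ∈ Icc 1 N \ {1} → (w * genC 0) p = w p := by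
    intro p hp
    simp only [mem_sdiff, mem_Icc, mem_singleton] at hp
    rw [Equiv.Perm.mul_apply, genC_zero_apply, if_neg (by omega), if_neg (by omega)]
  unfold Lsum
  rw [sum_split1 _ _ h1, sum_split1 _ _ h1]
  have eT : ∑ p ∈ Icc 1 N \ {1}, ∑ q ∈ Icc 1 N \ {1},
        ff p q ((w * genC 0) p) ((w * genC 0) q)
      = ∑ p ∈ Icc 1 N \ {1}, ∑ q ∈ Icc 1 N \ {1}, ff p q (w p) (w q) := by
    apply Finset.sum_congr rfl; intro p hp; apply Finset.sum_congr rfl; intro q hq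
    rw [e2 p hp, e2 q hq]
  have eM : ∑ p ∈ Icc 1 N \ {1},
        (ff p 1 ((w*genC 0) p) ((w*genC 0) 1) + ff 1 p ((w*genC 0) 1) ((w*genC 0) p))
      = ∑ p ∈ Icc 1 N \ {1}, (ff p 1 (w p) (w 1) + ff 1 p (w 1) (w p)) := by
    apply Finset.sum_congr rfl; intro p hp
    have hp2 : 1 < p := by simp only [mem_sdiff, mem_Icc, mem_singleton] at hp; omega
    rw [e1, e2 p hp, ff_gt hp2, ff_gt hp2, ff_lt hp2, ff_lt hp2]
    split_ifs <;> omega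
  have eC : ff 1 1 ((w*genC 0) 1) ((w*genC 0) 1)
      = ff 1 1 (w 1) (w 1) + (if 0 < w 1 then 1 else -1) := by
    rw [e1, ff_diag, ff_diag]
    split_ifs <;> omega
  rw [eT, eM, eC]
  ring

lemma stepk (N : ℤ) (w : Equiv.Perm ℤ) (k : ℕ) (hk : (k:ℤ)+2 ≤ N) :
    Lsum N (w * genC (k+1)) = Lsum N w
      + (if w ((k:ℤ)+1) < w ((k:ℤ)+2) then 1 else -1) := by
  have hab : w ((k:ℤ)+1) ≠ w ((k:ℤ)+2) := fun h => by have := w.injective h; omega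
  have hmem1 : (k:ℤ)+1 ∈ Icc 1 N := by simp only [mem_Icc]; omega
  have hmem2 : (k:ℤ)+2 ∈ Icc 1 N := by simp only [mem_Icc]; omega
  have hmne : (k:ℤ)+1 ≠ (k:ℤ)+2 := by omega
  have e1 : (w * genC (k+1)) ((k:ℤ)+1) = w ((k:ℤ)+2) := by
    rw [Equiv.Perm.mul_apply, genC_succ_apply, if_pos rfl]
  have e2 : (w * genC (k+1)) ((k:ℤ)+2) = w ((k:ℤ)+1) := by
    rw [Equiv.Perm.mul_apply, genC_succ_apply, if_neg (by omega), if_pos rfl]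
  have efix : ∀ p ∈ Icc 1 N \ {(k:ℤ)+1, (k:ℤ)+2}, (w * genC (k+1)) p = w p := by
    intro p hp
    simp only [mem_sdiff, mem_Icc, mem_insert, mem_singleton] at hp
    rw [Equiv.Perm.mul_apply, genC_succ_apply, if_neg (by omega), if_neg (by omega),
      if_neg (by omega), if_neg (by omega)]
  unfold Lsum
  rw [sum_split2 _ _ hmem1 hmem2 hmne, sum_split2 _ _ hmem1 hmem2 hmne]
  have eT : ∑ p ∈ Icc 1 N \ {(k:ℤ)+1, (k:ℤ)+2}, ∑ q ∈ Icc 1 N \ {(k:ℤ)+1, (k:ℤ)+2},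
        ff p q ((w * genC (k+1)) p) ((w * genC (k+1)) q)
      = ∑ p ∈ Icc 1 N \ {(k:ℤ)+1, (k:ℤ)+2}, ∑ q ∈ Icc 1 N \ {(k:ℤ)+1, (k:ℤ)+2},
        ff p q (w p) (w q) := by
    apply Finset.sum_congr rfl; intro p hp; apply Finset.sum_congr rfl; intro q hq
    rw [efix p hp, efix q hq]
  have eM : ∑ p ∈ Icc 1 N \ {(k:ℤ)+1, (k:ℤ)+2},
        (ff p ((k:ℤ)+1) ((w * genC (k+1)) p) ((w * genC (k+1)) ((k:ℤ)+1))
          + ff p ((k:ℤ)+2) ((w * genC (k+1)) p) ((w * genC (k+1)) ((k:ℤ)+2))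
          + ff ((k:ℤ)+1) p ((w * genC (k+1)) ((k:ℤ)+1)) ((w * genC (k+1)) p)
          + ff ((k:ℤ)+2) p ((w * genC (k+1)) ((k:ℤ)+2)) ((w * genC (k+1)) p))
      = ∑ p ∈ Icc 1 N \ {(k:ℤ)+1, (k:ℤ)+2},
        (ff p ((k:ℤ)+1) (w p) (w ((k:ℤ)+1)) + ff p ((k:ℤ)+2) (w p) (w ((k:ℤ)+2))
          + ff ((k:ℤ)+1) p (w ((k:ℤ)+1)) (w p) + ff ((k:ℤ)+2) p (w ((k:ℤ)+2)) (w p)) := by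
    apply Finset.sum_congr rfl; intro p hp
    have hp2 : 1 ≤ p ∧ p ≠ (k:ℤ)+1 ∧ p ≠ (k:ℤ)+2 := by
      simp only [mem_sdiff, mem_Icc, mem_insert, mem_singleton] at hp; tauto
    rw [e1, e2, efix p hp]
    rcases lt_trichotomy p ((k:ℤ)+1) with h | h | h
    · have h2 : p < (k:ℤ)+2 := by omega
      rw [ff_lt h, ff_lt h, ff_lt h2, ff_lt h2, ff_gt h, ff_gt h, ff_gt h2, ff_gt h2]
      split_ifs <;> omega
    · exact absurd h hp2.2.1
    · have h3 : (k:ℤ)+2 < p ∨ p = (k:ℤ)+2 := by omega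
      rcases h3 with h3 | h3
      · rw [ff_gt h, ff_gt h, ff_gt h3, ff_gt h3, ff_lt h, ff_lt h, ff_lt h3, ff_lt h3]
        split_ifs <;> omega
      · exact absurd h3 hp2.2.2
  have hlt : (k:ℤ)+1 < (k:ℤ)+2 := by omega
  have eC : ff ((k:ℤ)+1) ((k:ℤ)+1) ((w * genC (k+1)) ((k:ℤ)+1)) ((w * genC (k+1)) ((k:ℤ)+1))
        + ff ((k:ℤ)+1) ((k:ℤ)+2) ((w * genC (k+1)) ((k:ℤ)+1)) ((w * genC (k+1)) ((k:ℤ)+2))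
        + ff ((k:ℤ)+2) ((k:ℤ)+1) ((w * genC (k+1)) ((k:ℤ)+2)) ((w * genC (k+1)) ((k:ℤ)+1))
        + ff ((k:ℤ)+2) ((k:ℤ)+2) ((w * genC (k+1)) ((k:ℤ)+2)) ((w * genC (k+1)) ((k:ℤ)+2))
      = ff ((k:ℤ)+1) ((k:ℤ)+1) (w ((k:ℤ)+1)) (w ((k:ℤ)+1))
        + ff ((k:ℤ)+1) ((k:ℤ)+2) (w ((k:ℤ)+1)) (w ((k:ℤ)+2))
        + ff ((k:ℤ)+2) ((k:ℤ)+1) (w ((k:ℤ)+2)) (w ((k:ℤ)+1))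
        + ff ((k:ℤ)+2) ((k:ℤ)+2) (w ((k:ℤ)+2)) (w ((k:ℤ)+2))
        + (if w ((k:ℤ)+1) < w ((k:ℤ)+2) then 1 else -1) := by
    rw [e1, e2, ff_diag, ff_diag, ff_diag, ff_diag, ff_lt hlt, ff_lt hlt,
      ff_gt hlt, ff_gt hlt]
    split_ifs <;> omega
  rw [eT, eM, eC]
  ring


def IsWord (l : List (Equiv.Perm ℤ)) : Prop := ∀ x ∈ l, ∃ i, x = genC i

lemma sodd_prod (l : List (Equiv.Perm ℤ)) (h : IsWord l) : SOdd l.prod := by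
  induction l with
  | nil => simpa using sodd_one
  | cons x l ih =>
      rw [List.prod_cons]
      obtain ⟨i, rfl⟩ := h x (by simp)
      exact sodd_mul (genC_odd i) (ih (fun y hy => h y (by simp [hy])))

lemma lower (l : List (Equiv.Perm ℤ)) (hword : IsWord l) :
    ∀ N : ℤ, 1 ≤ N → ValidB N l.prod → Lsum N l.prod ≤ (l.length : ℤ) := by
  induction l using List.reverseRecOn with
  | nil => intro N hN _; simp [Lsum_one]
  | append_singleton l s IH =>
      intro N hN hv
      obtain ⟨k, rfl⟩ := hword s (by simp)
      have hword' : IsWord l := fun y hy => hword y (by simp [hy])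
      have hprod : (l ++ [genC k]).prod = l.prod * genC k := by
        rw [List.prod_append, List.prod_cons, List.prod_nil, mul_one]
      set M : ℤ := max N ((k:ℤ)+2) with hM
      have hNM : N ≤ M := le_max_left _ _
      have hkM : (k:ℤ)+2 ≤ M := le_max_right _ _
      have hM1 : 1 ≤ M := by omega
      have hvM : ValidB M (l ++ [genC k]).prod := valid_mono hv hNM
      have hvl : ValidB M l.prod := by
        intro x hx
        have h1 : l.prod = (l ++ [genC k]).prod * genC k := by
          rw [hprod, mul_assoc, genC_sq, mul_one]
        rw [h1, Equiv.Perm.mul_apply, genC_fix k x (by omega), hvM x hx]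
      have IH' := IH hword' M hM1 hvl
      have hsodd : SOdd l.prod := sodd_prod l hword'
      have hstep : Lsum M (l ++ [genC k]).prod ≤ Lsum M l.prod + 1 := by
        rw [hprod]
        cases k with
        | zero =>
            rw [step0 M l.prod hsodd hM1]
            split_ifs <;> omega
        | succ k =>
            rw [stepk M l.prod k (by push_cast at hkM ⊢; omega)]
            split_ifs <;> omega
      have hstab : Lsum N (l ++ [genC k]).prod = Lsum M (l ++ [genC k]).prod :=
        (Lsum_stable _ hN hv hNM).symm
      rw [hstab]
      simp only [List.length_append, List.length_cons, List.length_nil]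
      push_cast
      omega


lemma eq_one_of_no_descent (w : Equiv.Perm ℤ) (N : ℤ) (hw : SOdd w) (hN : 1 ≤ N)
    (hv : ValidB N w) (hc1 : 0 ≤ w 1)
    (hc2 : ∀ k : ℕ, (k:ℤ)+2 ≤ N → ¬ w ((k:ℤ)+2) < w ((k:ℤ)+1)) : w = 1 := by
  have hadj : ∀ p : ℤ, 1 ≤ p → p + 1 ≤ N → w p < w (p+1) := by
    intro p h1 h2
    obtain ⟨k, hk⟩ : ∃ k : ℕ, (k:ℤ) = p - 1 := ⟨(p-1).toNat, by omega⟩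
    have h3 := hc2 k (by omega)
    have h4 : (k:ℤ)+1 = p := by omega
    have h5 : (k:ℤ)+2 = p+1 := by omega
    rw [h4, h5] at h3
    have hne : w p ≠ w (p+1) := fun h => by have := w.injective h; omega
    omega
  have hw1 : 1 ≤ w 1 := by
    have := sodd_ne_zero hw (one_ne_zero (α := ℤ))
    omega
  have hup : ∀ p : ℤ, 1 ≤ p → (p ≤ N → p ≤ w p) := by
    refine fun p hp => Int.le_induction (motive := fun p _ => p ≤ N → p ≤ w p)
      (fun _ => hw1) (fun n hn ih h2 => ?_) p hp
    have h3 := hadj n hn (by omega)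
    have h4 := ih (by omega)
    omega
  have hdown : ∀ p : ℤ, p ≤ N → (1 ≤ p → w p ≤ p) := by
    refine fun p hp => Int.le_induction_down (motive := fun p _ => 1 ≤ p → w p ≤ p)
      (fun _ => ?_) (fun n hn ih h1 => ?_) p hp
    · have h2 := valid_bound hv (x := N) (by rw [abs_of_pos (by omega)])
      have h3 := abs_le.1 h2
      omega
    · by_cases h2 : 1 ≤ n
      · have h3 := ih h2
        have h4 := hadj (n-1) h1 (by omega)
        simp only [sub_add_cancel] at h4
        omega
      · omega
  have hfixpos : ∀ p : ℤ, 1 ≤ p → w p = p := by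
    intro p hp
    by_cases h : p ≤ N
    · have := hup p hp h
      have := hdown p h hp
      omega
    · exact hv p (by rw [abs_of_pos (by omega)]; omega)
  apply Equiv.ext
  intro x
  simp only [Equiv.Perm.one_apply]
  rcases lt_trichotomy x 0 with h | rfl | h
  · have h2 := hw (-x)
    simp only [neg_neg] at h2
    rw [h2, hfixpos (-x) (by omega)]
    omega
  · exact sodd_zero hw
  · exact hfixpos x (by omega)

lemma upper : ∀ (n : ℕ) (w : Equiv.Perm ℤ) (N : ℤ), SOdd w → 1 ≤ N → ValidB N w →
    Lsum N w = (n : ℤ) → ∃ l, IsWord l ∧ l.length ≤ n ∧ l.prod = w := by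
  intro n
  induction n using Nat.strong_induction_on with
  | _ n IH =>
    intro w N hw hN hv hL
    by_cases hc1 : w 1 < 0
    · have hst := step0 N w hw hN
      rw [if_neg (by omega)] at hst
      set w' := w * genC 0 with hw'
      have hpos : 1 ≤ n := by
        have := Lsum_nonneg N w'
        omega
      have hL' : Lsum N w' = ((n-1 : ℕ) : ℤ) := by push_cast; omega
      have hsodd' : SOdd w' := sodd_mul hw (genC_odd 0)
      have hv' : ValidB N w' := by
        intro x hx
        rw [hw', Equiv.Perm.mul_apply, genC_fix 0 x (by push_cast; omega), hv x hx]
      obtain ⟨l, hl1, hl2, hl3⟩ := IH (n-1) (by omega) w' N hsodd' hN hv' hL'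
      refine ⟨l ++ [genC 0], ?_, ?_, ?_⟩
      · intro x hx
        rcases List.mem_append.1 hx with h | h
        · exact hl1 x h
        · simp only [List.mem_singleton] at h
          exact ⟨0, h⟩
      · simp only [List.length_append, List.length_cons, List.length_nil]
        omega
      · rw [List.prod_append, List.prod_cons, List.prod_nil, mul_one, hl3, hw',
          mul_assoc, genC_sq, mul_one]
    · by_cases hc2 : ∃ k : ℕ, (k:ℤ)+2 ≤ N ∧ w ((k:ℤ)+2) < w ((k:ℤ)+1)
      · obtain ⟨k, hk1, hk2⟩ := hc2
        have hst := stepk N w k hk1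
        rw [if_neg (by omega)] at hst
        set w' := w * genC (k+1) with hw'
        have hpos : 1 ≤ n := by
          have := Lsum_nonneg N w'
          omega
        have hL' : Lsum N w' = ((n-1 : ℕ) : ℤ) := by push_cast; omega
        have hsodd' : SOdd w' := sodd_mul hw (genC_odd (k+1))
        have hv' : ValidB N w' := by
          intro x hx
          rw [hw', Equiv.Perm.mul_apply, genC_fix (k+1) x (by push_cast; omega), hv x hx]
        obtain ⟨l, hl1, hl2, hl3⟩ := IH (n-1) (by omega) w' N hsodd' hN hv' hL'
        refine ⟨l ++ [genC (k+1)], ?_, ?_, ?_⟩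
        · intro x hx
          rcases List.mem_append.1 hx with h | h
          · exact hl1 x h
          · simp only [List.mem_singleton] at h
            exact ⟨k+1, h⟩
        · simp only [List.length_append, List.length_cons, List.length_nil]
          omega
        · rw [List.prod_append, List.prod_cons, List.prod_nil, mul_one, hl3, hw',
            mul_assoc, genC_sq, mul_one]
      · push_neg at hc1 hc2
        have h1 : w = 1 := eq_one_of_no_descent w N hw hN hv hc1
          (fun k hk => by have := hc2 k hk; omega)
        exact ⟨[], fun x hx => absurd hx List.not_mem_nil, by simp, by simp [h1]⟩

lemma lenC_eq (w : Equiv.Perm ℤ) (N : ℤ) (hw : SOdd w) (hN : 1 ≤ N) (hv : ValidB N w) :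
    (lenC w : ℤ) = Lsum N w := by
  have hnn := Lsum_nonneg N w
  obtain ⟨n, hn⟩ : ∃ n : ℕ, Lsum N w = (n : ℤ) := ⟨(Lsum N w).toNat, by omega⟩
  obtain ⟨l, hl1, hl2, hl3⟩ := upper n w N hw hN hv hn
  have hS : l.length ∈ {m | ∃ l' : List (Equiv.Perm ℤ),
      (∀ x ∈ l', ∃ i, x = genC i) ∧ l'.length = m ∧ l'.prod = w} := ⟨l, hl1, rfl, hl3⟩
  have hub : lenC w ≤ n := by
    unfold lenC
    exact le_trans (Nat.sInf_le hS) hl2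
  have hlb : n ≤ lenC w := by
    unfold lenC
    apply le_csInf ⟨l.length, hS⟩
    rintro m ⟨l', hl'1, rfl, hl'3⟩
    have h5 := lower l' hl'1 N hN (by rw [hl'3]; exact hv)
    rw [hl'3, hn] at h5
    exact_mod_cast h5
  have h6 : lenC w = n := le_antisymm hub hlb
  rw [h6, hn]


section PerP
variable {i j p a b c : ℤ}

lemma midp_eq (hi : 0 < i) (hij : i < j) (hp : 0 < p) (hpi : p ≠ i) (hpj : p ≠ j)
    (hca : c ≠ a) (hcb : c ≠ b) (hcna : c ≠ -a) (hcnb : c ≠ -b) (hsum : 0 < a + b)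
    (hA : p < i → ¬(-b < c ∧ c < a)) (hB : p < j → ¬(-a < c ∧ c < b)) :
    ff p i c (-b) + ff p j c (-a) + ff i p (-b) c + ff j p (-a) c
      = ff p i c a + ff p j c b + ff i p a c + ff j p b c := by
  rcases lt_trichotomy p i with h | h | h
  · have h2 : p < j := by omega
    have hA' := hA h
    have hB' := hB h2
    rw [ff_lt h, ff_lt h, ff_lt h2, ff_lt h2, ff_gt h, ff_gt h, ff_gt h2, ff_gt h2]
    split_ifs <;> omega
  · exact absurd h hpi
  · rcases lt_trichotomy p j with h2 | h2 | h2
    · have hB' := hB h2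
      rw [ff_gt h, ff_gt h, ff_lt h2, ff_lt h2, ff_lt h, ff_lt h, ff_gt h2, ff_gt h2]
      split_ifs <;> omega
    · exact absurd h2 hpj
    · rw [ff_gt h, ff_gt h, ff_gt h2, ff_gt h2, ff_lt h, ff_lt h, ff_lt h2, ff_lt h2]
      split_ifs <;> omega

lemma midp_le (hi : 0 < i) (hij : i < j) (hp : 0 < p) (hpi : p ≠ i) (hpj : p ≠ j)
    (hca : c ≠ a) (hcb : c ≠ b) (hcna : c ≠ -a) (hcnb : c ≠ -b) (hsum : a + b < 0) :
    ff p i c (-b) + ff p j c (-a) + ff i p (-b) c + ff j p (-a) c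
      ≤ ff p i c a + ff p j c b + ff i p a c + ff j p b c := by
  rcases lt_trichotomy p i with h | h | h
  · have h2 : p < j := by omega
    rw [ff_lt h, ff_lt h, ff_lt h2, ff_lt h2, ff_gt h, ff_gt h, ff_gt h2, ff_gt h2]
    split_ifs <;> omega
  · exact absurd h hpi
  · rcases lt_trichotomy p j with h2 | h2 | h2
    · rw [ff_gt h, ff_gt h, ff_lt h2, ff_lt h2, ff_lt h, ff_lt h, ff_gt h2, ff_gt h2]
      split_ifs <;> omega
    · exact absurd h2 hpj
    · rw [ff_gt h, ff_gt h, ff_gt h2, ff_gt h2, ff_lt h, ff_lt h, ff_lt h2, ff_lt h2]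
      split_ifs <;> omega

lemma midp_ge (hi : 0 < i) (hij : i < j) (hp : 0 < p) (hpi : p ≠ i) (hpj : p ≠ j)
    (hca : c ≠ a) (hcb : c ≠ b) (hcna : c ≠ -a) (hcnb : c ≠ -b) (hsum : 0 < a + b) :
    ff p i c a + ff p j c b + ff i p a c + ff j p b c
      ≤ ff p i c (-b) + ff p j c (-a) + ff i p (-b) c + ff j p (-a) c := by
  rcases lt_trichotomy p i with h | h | h
  · have h2 : p < j := by omega
    rw [ff_lt h, ff_lt h, ff_lt h2, ff_lt h2, ff_gt h, ff_gt h, ff_gt h2, ff_gt h2]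
    split_ifs <;> omega
  · exact absurd h hpi
  · rcases lt_trichotomy p j with h2 | h2 | h2
    · rw [ff_gt h, ff_gt h, ff_lt h2, ff_lt h2, ff_lt h, ff_lt h, ff_gt h2, ff_gt h2]
      split_ifs <;> omega
    · exact absurd h2 hpj
    · rw [ff_gt h, ff_gt h, ff_gt h2, ff_gt h2, ff_lt h, ff_lt h, ff_lt h2, ff_lt h2]
      split_ifs <;> omega

lemma midp_ge2 (hi : 0 < i) (hij : i < j) (hp : 0 < p) (hpi : p ≠ i) (hpj : p ≠ j)
    (hca : c ≠ a) (hcb : c ≠ b) (hcna : c ≠ -a) (hcnb : c ≠ -b) (hsum : 0 < a + b)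
    (hbad : (p < i ∧ -b < c ∧ c < a) ∨ (p < j ∧ -a < c ∧ c < b)) :
    ff p i c a + ff p j c b + ff i p a c + ff j p b c + 2
      ≤ ff p i c (-b) + ff p j c (-a) + ff i p (-b) c + ff j p (-a) c := by
  rcases lt_trichotomy p i with h | h | h
  · have h2 : p < j := by omega
    rw [ff_lt h, ff_lt h, ff_lt h2, ff_lt h2, ff_gt h, ff_gt h, ff_gt h2, ff_gt h2]
    split_ifs <;> omega
  · exact absurd h hpi
  · rcases lt_trichotomy p j with h2 | h2 | h2
    · have hbad' : -a < c ∧ c < b := by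
        rcases hbad with ⟨h3, _⟩ | ⟨_, h4⟩
        · omega
        · exact h4
      rw [ff_gt h, ff_gt h, ff_lt h2, ff_lt h2, ff_lt h, ff_lt h, ff_gt h2, ff_gt h2]
      split_ifs <;> omega
    · exact absurd h2 hpj
    · exfalso
      rcases hbad with ⟨h3, _⟩ | ⟨h3, _⟩ <;> omega

lemma corner_good (hij : i < j) (ha0 : a ≠ 0) (hb0 : b ≠ 0) (hsum : 0 < a + b)
    (hneg : a < 0 ∨ b < 0) :
    ff i i (-b) (-b) + ff i j (-b) (-a) + ff j i (-a) (-b) + ff j j (-a) (-a)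
      = ff i i a a + ff i j a b + ff j i b a + ff j j b b + 1 := by
  rw [ff_diag, ff_diag, ff_diag, ff_diag, ff_lt hij, ff_lt hij, ff_gt hij, ff_gt hij]
  split_ifs <;> omega

lemma corner_neg (hij : i < j) (ha0 : a ≠ 0) (hb0 : b ≠ 0) (hsum : a + b < 0) :
    ff i i (-b) (-b) + ff i j (-b) (-a) + ff j i (-a) (-b) + ff j j (-a) (-a)
      ≤ ff i i a a + ff i j a b + ff j i b a + ff j j b b - 1 := by
  rw [ff_diag, ff_diag, ff_diag, ff_diag, ff_lt hij, ff_lt hij, ff_gt hij, ff_gt hij]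
  split_ifs <;> omega

lemma corner_pos (hij : i < j) (ha : 0 < a) (hb : 0 < b) :
    ff i i (-b) (-b) + ff i j (-b) (-a) + ff j i (-a) (-b) + ff j j (-a) (-a)
      = ff i i a a + ff i j a b + ff j i b a + ff j j b b + 3 := by
  rw [ff_diag, ff_diag, ff_diag, ff_diag, ff_lt hij, ff_lt hij, ff_gt hij, ff_gt hij]
  split_ifs <;> omega

end PerP


lemma main_count (w : Equiv.Perm ℤ) (hw : SOdd w) (N i j : ℤ) (hi : 0 < i) (hij : i < j)
    (hjN : j ≤ N) :
    (Lsum N (w * tbar i j) = Lsum N w + 1) ↔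
      (-w i < w j ∧ (w i < 0 ∨ w j < 0) ∧
        (∀ p : ℤ, 0 < p → p < i → ¬(-w j < w p ∧ w p < w i)) ∧
        (∀ p : ℤ, 0 < p → p < j → ¬(-w i < w p ∧ w p < w j))) := by
  have himem : i ∈ Icc 1 N := by simp only [mem_Icc]; omega
  have hjmem : j ∈ Icc 1 N := by simp only [mem_Icc]; omega
  have hijne : i ≠ j := by omega
  have ei : (w * tbar i j) i = -(w j) := by
    rw [Equiv.Perm.mul_apply, tbar_apply_i hi hij]; exact hw j
  have ej : (w * tbar i j) j = -(w i) := by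
    rw [Equiv.Perm.mul_apply, tbar_apply_j hi hij]; exact hw i
  have hmem' : ∀ p ∈ Icc 1 N \ ({i, j} : Finset ℤ), 1 ≤ p ∧ p ≤ N ∧ p ≠ i ∧ p ≠ j := by
    intro p hp
    simp only [mem_sdiff, mem_Icc, mem_insert, mem_singleton] at hp
    tauto
  have efix : ∀ p ∈ Icc 1 N \ ({i, j} : Finset ℤ), (w * tbar i j) p = w p := by
    intro p hp
    obtain ⟨h1, h2, h3, h4⟩ := hmem' p hp
    rw [Equiv.Perm.mul_apply, tbar_fix h3 (by omega) h4 (by omega)]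
  have ha0 : w i ≠ 0 := sodd_ne_zero hw (by omega)
  have hb0 : w j ≠ 0 := sodd_ne_zero hw (by omega)
  have hanb : w i ≠ -(w j) := by
    intro h
    have h2 : w i = w (-j) := by rw [h, hw j]
    have := w.injective h2
    omega
  have hcfacts : ∀ p, 0 < p → p ≠ i → p ≠ j →
      w p ≠ w i ∧ w p ≠ w j ∧ w p ≠ -(w i) ∧ w p ≠ -(w j) := by
    intro p h1 h2 h3
    refine ⟨fun h => h2 (w.injective h), fun h => h3 (w.injective h), fun h => ?_, fun h => ?_⟩
    · have h4 : w p = w (-i) := by rw [h, hw i]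
      have := w.injective h4
      omega
    · have h4 : w p = w (-j) := by rw [h, hw j]
      have := w.injective h4
      omega
  have hLw : Lsum N w = (ff i i (w i) (w i) + ff i j (w i) (w j) + ff j i (w j) (w i)
        + ff j j (w j) (w j))
      + (∑ p ∈ Icc 1 N \ {i, j}, (ff p i (w p) (w i) + ff p j (w p) (w j)
          + ff i p (w i) (w p) + ff j p (w j) (w p)))
      + ∑ p ∈ Icc 1 N \ {i, j}, ∑ q ∈ Icc 1 N \ {i, j}, ff p q (w p) (w q) :=
    sum_split2 _ _ himem hjmem hijne
  have hLw' : Lsum N (w * tbar i j) = (ff i i (-(w j)) (-(w j)) + ff i j (-(w j)) (-(w i))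
        + ff j i (-(w i)) (-(w j)) + ff j j (-(w i)) (-(w i)))
      + (∑ p ∈ Icc 1 N \ {i, j}, (ff p i (w p) (-(w j)) + ff p j (w p) (-(w i))
          + ff i p (-(w j)) (w p) + ff j p (-(w i)) (w p)))
      + ∑ p ∈ Icc 1 N \ {i, j}, ∑ q ∈ Icc 1 N \ {i, j}, ff p q (w p) (w q) := by
    rw [Lsum, sum_split2 _ _ himem hjmem hijne, ei, ej]
    congr 1
    · congr 1
      apply Finset.sum_congr rfl
      intro p hp
      rw [efix p hp]
    · apply Finset.sum_congr rfl
      intro p hp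
      apply Finset.sum_congr rfl
      intro q hq
      rw [efix p hp, efix q hq]
  rw [hLw, hLw']
  constructor
  · intro hmain
    by_cases h1 : 0 < w i + w j
    swap
    · exfalso
      have h1' : w i + w j < 0 := by
        rcases lt_trichotomy (w i + w j) 0 with h | h | h
        · exact h
        · exact absurd (by omega : w i = -(w j)) hanb
        · exact absurd h h1
      have hc := corner_neg hij ha0 hb0 h1'
      have hm : ∑ p ∈ Icc 1 N \ ({i, j} : Finset ℤ),
            (ff p i (w p) (-(w j)) + ff p j (w p) (-(w i))
              + ff i p (-(w j)) (w p) + ff j p (-(w i)) (w p))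
          ≤ ∑ p ∈ Icc 1 N \ ({i, j} : Finset ℤ),
            (ff p i (w p) (w i) + ff p j (w p) (w j)
              + ff i p (w i) (w p) + ff j p (w j) (w p)) := by
        apply Finset.sum_le_sum
        intro p hp
        obtain ⟨hm1, hm2, hm3, hm4⟩ := hmem' p hp
        obtain ⟨hf1, hf2, hf3, hf4⟩ := hcfacts p (by omega) hm3 hm4
        exact midp_le hi hij (by omega) hm3 hm4 hf1 hf2 hf3 hf4 h1'
      omega
    by_cases h2 : w i < 0 ∨ w j < 0
    swap
    · exfalso
      have ha : 0 < w i := by omega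
      have hb : 0 < w j := by omega
      have hc := corner_pos hij ha hb
      have hm : ∑ p ∈ Icc 1 N \ ({i, j} : Finset ℤ),
            (ff p i (w p) (w i) + ff p j (w p) (w j)
              + ff i p (w i) (w p) + ff j p (w j) (w p))
          ≤ ∑ p ∈ Icc 1 N \ ({i, j} : Finset ℤ),
            (ff p i (w p) (-(w j)) + ff p j (w p) (-(w i))
              + ff i p (-(w j)) (w p) + ff j p (-(w i)) (w p)) := by
        apply Finset.sum_le_sum
        intro p hp
        obtain ⟨hm1, hm2, hm3, hm4⟩ := hmem' p hp
        obtain ⟨hf1, hf2, hf3, hf4⟩ := hcfacts p (by omega) hm3 hm4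
        exact midp_ge hi hij (by omega) hm3 hm4 hf1 hf2 hf3 hf4 h1
      omega
    by_cases h3 : (∀ p : ℤ, 0 < p → p < i → ¬(-w j < w p ∧ w p < w i)) ∧
        (∀ p : ℤ, 0 < p → p < j → ¬(-w i < w p ∧ w p < w j))
    · exact ⟨by omega, h2, h3.1, h3.2⟩
    · exfalso
      have hbad : ∃ p₀ : ℤ, (0 < p₀ ∧ p₀ ≠ i ∧ p₀ ≠ j ∧ p₀ ≤ N) ∧
          ((p₀ < i ∧ -(w j) < w p₀ ∧ w p₀ < w i) ∨ (p₀ < j ∧ -(w i) < w p₀ ∧ w p₀ < w j)) := by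
        rcases not_and_or.1 h3 with h | h
        · push_neg at h
          obtain ⟨p₀, hp1, hp2, hp3, hp4⟩ := h
          exact ⟨p₀, ⟨hp1, by omega, by omega, by omega⟩, Or.inl ⟨hp2, by omega, hp4⟩⟩
        · push_neg at h
          obtain ⟨p₀, hp1, hp2, hp3, hp4⟩ := h
          have hne : p₀ ≠ i := by
            intro hcc
            subst hcc
            rcases h2 with h2 | h2 <;> omega
          exact ⟨p₀, ⟨hp1, hne, by omega, by omega⟩, Or.inr ⟨hp2, by omega, hp4⟩⟩
      obtain ⟨p₀, ⟨hq1, hq2, hq3, hq4⟩, hbad2⟩ := hbad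
      have hp0mem : p₀ ∈ Icc 1 N \ ({i, j} : Finset ℤ) := by
        simp only [mem_sdiff, mem_Icc, mem_insert, mem_singleton]
        constructor
        · omega
        · push_neg
          exact ⟨hq2, hq3⟩
      have hc := corner_good hij ha0 hb0 h1 h2
      set G : ℤ → ℤ := fun p => ff p i (w p) (w i) + ff p j (w p) (w j)
          + ff i p (w i) (w p) + ff j p (w j) (w p) with hG
      set G' : ℤ → ℤ := fun p => ff p i (w p) (-(w j)) + ff p j (w p) (-(w i))
          + ff i p (-(w j)) (w p) + ff j p (-(w i)) (w p) with hG'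
      have e' := Finset.sum_erase_add (Icc 1 N \ ({i, j} : Finset ℤ)) G' hp0mem
      have e := Finset.sum_erase_add (Icc 1 N \ ({i, j} : Finset ℤ)) G hp0mem
      have hrest : ∑ p ∈ (Icc 1 N \ ({i, j} : Finset ℤ)).erase p₀, G p
          ≤ ∑ p ∈ (Icc 1 N \ ({i, j} : Finset ℤ)).erase p₀, G' p := by
        apply Finset.sum_le_sum
        intro p hp
        have hp' := Finset.mem_of_mem_erase hp
        obtain ⟨hm1, hm2, hm3, hm4⟩ := hmem' p hp'
        obtain ⟨hf1, hf2, hf3, hf4⟩ := hcfacts p (by omega) hm3 hm4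
        exact midp_ge hi hij (by omega) hm3 hm4 hf1 hf2 hf3 hf4 h1
      have hp0le : G p₀ + 2 ≤ G' p₀ := by
        obtain ⟨hf1, hf2, hf3, hf4⟩ := hcfacts p₀ (by omega) hq2 hq3
        exact midp_ge2 hi hij (by omega) hq2 hq3 hf1 hf2 hf3 hf4 h1 hbad2
      have hGs : (Finset.Icc 1 N \ ({i,j} : Finset ℤ)).sum G
          = ∑ p ∈ Finset.Icc 1 N \ ({i,j} : Finset ℤ), G p := rfl
      have hGs' : (Finset.Icc 1 N \ ({i,j} : Finset ℤ)).sum G'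
          = ∑ p ∈ Finset.Icc 1 N \ ({i,j} : Finset ℤ), G' p := rfl
      omega
  · rintro ⟨g1, g2, g3, g4⟩
    have h1 : 0 < w i + w j := by omega
    have hc := corner_good hij ha0 hb0 h1 g2
    have hm : ∑ p ∈ Icc 1 N \ ({i, j} : Finset ℤ),
          (ff p i (w p) (-(w j)) + ff p j (w p) (-(w i))
            + ff i p (-(w j)) (w p) + ff j p (-(w i)) (w p))
        = ∑ p ∈ Icc 1 N \ ({i, j} : Finset ℤ),
          (ff p i (w p) (w i) + ff p j (w p) (w j)
            + ff i p (w i) (w p) + ff j p (w j) (w p)) := by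
      apply Finset.sum_congr rfl
      intro p hp
      obtain ⟨hm1, hm2, hm3, hm4⟩ := hmem' p hp
      obtain ⟨hf1, hf2, hf3, hf4⟩ := hcfacts p (by omega) hm3 hm4
      exact midp_eq hi hij (by omega) hm3 hm4 hf1 hf2 hf3 hf4 h1
        (fun hh => by have := g3 p (by omega) hh; omega)
        (fun hh => by have := g4 p (by omega) hh; omega)
    omega

end BilleyAux

open BilleyAux

/-- Billey's covering criterion: `ℓ(w t̄_{ij}) = ℓ(w) + 1` iff (i) `-w_i < w_j`,
(ii) `w_i < 0` or `w_j < 0`, and (iii) there is no `p < i` with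
`-w_j < w_p < w_i` and no `p < j` with `-w_i < w_p < w_j`. -/
theorem length_mul_tbar (π : Equiv.Perm ℤ) (hπ : IsSignedPerm π)
    (i j : ℤ) (hi : 0 < i) (hij : i < j) :
    lenC (π * tbar i j) = lenC π + 1 ↔
      (-π i < π j ∧ (π i < 0 ∨ π j < 0) ∧
        (∀ p : ℤ, 0 < p → p < i → ¬(-π j < π p ∧ π p < π i)) ∧
        (∀ p : ℤ, 0 < p → p < j → ¬(-π i < π p ∧ π p < π j))) := by
  obtain ⟨hodd, N₀, hN₀⟩ := hπ
  set N : ℤ := max (N₀ : ℤ) j with hNdef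
  have hjN : j ≤ N := le_max_right _ _
  have hN0 : (N₀ : ℤ) ≤ N := le_max_left _ _
  have hN1 : 1 ≤ N := by omega
  have hvπ : ValidB N π := fun k hk => hN₀ k (lt_of_le_of_lt hN0 hk)
  have hodd' : SOdd (π * tbar i j) := sodd_mul hodd (tbar_odd hi hij)
  have hv' : ValidB N (π * tbar i j) := by
    intro x hx
    have hx' : x < -N ∨ N < x := by
      rcases lt_abs.1 hx with h | h
      · right; exact h
      · left; omega
    rw [Equiv.Perm.mul_apply, tbar_fix (by omega) (by omega) (by omega) (by omega), hvπ x hx]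
  have h1 := lenC_eq π N hodd hN1 hvπ
  have h2 := lenC_eq (π * tbar i j) N hodd' hN1 hv'
  rw [← main_count π hodd N i j hi hij hjN]
  omega
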